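/- arXiv:1205.5231 — 2 statements merged into one kernel-verified Lean document; each statement's English description precedes it below -/
import Mathlib

section
/- Let ρ be a subnormalized density operator on a finite-dimensional Hilbert space and Π an operator with 0 ≤ Π ≤ I. Then P(ΠρΠ, ρ) ≤ (1/√(tr ρ)) · √((tr ρ)² - (tr[Π² ρ])²). -/
open Matrix Kronecker ComplexOrder

noncomputable section


open scoped Classical
namespace QIT

/-- Square root of a positive semidefinite matrix (junk value `0` otherwise). -/
noncomputable def msqrt {n : Type*} [Fintype n] [DecidableEq n] (A : Matrix n n ℂ) :
    Matrix n n ℂ :=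
  if h : A.PosSemidef then
    (h.1.eigenvectorUnitary : Matrix n n ℂ) *
      Matrix.diagonal ((↑) ∘ (fun x : ℝ => Real.sqrt x) ∘ h.1.eigenvalues) *
      (star h.1.eigenvectorUnitary : Matrix n n ℂ)
  else 0

/-- Trace norm `‖A‖₁ = tr √(Aᴴ A)`. -/
noncomputable def traceNorm {n : Type*} [Fintype n] [DecidableEq n] (A : Matrix n n ℂ) : ℝ :=
  ((msqrt (Aᴴ * A)).trace).re

/-- Fidelity `F(ρ,σ) = ‖√ρ √σ‖₁`. -/
noncomputable def fidelity {n : Type*} [Fintype n] [DecidableEq n] (ρ σ : Matrix n n ℂ) : ℝ :=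
  traceNorm (msqrt ρ * msqrt σ)

/-- Generalized fidelity. -/
noncomputable def gFid {n : Type*} [Fintype n] [DecidableEq n] (ρ σ : Matrix n n ℂ) : ℝ :=
  fidelity ρ σ + Real.sqrt ((1 - ρ.trace.re) * (1 - σ.trace.re))

/-- Purified distance. -/
noncomputable def pDist {n : Type*} [Fintype n] [DecidableEq n] (ρ σ : Matrix n n ℂ) : ℝ :=
  Real.sqrt (1 - (gFid ρ σ) ^ 2)

/-- Subnormalized density operator. -/
def SubNormalized {n : Type*} [Fintype n] (ρ : Matrix n n ℂ) : Prop :=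
  ρ.PosSemidef ∧ ρ.trace.re ≤ 1

/-- Loewner order `A ≤ B`. -/
def mLE {n : Type*} [Fintype n] (A B : Matrix n n ℂ) : Prop := (B - A).PosSemidef

/-- Functional calculus for Hermitian matrices (junk value `0` otherwise). -/
noncomputable def cfcHerm {n : Type*} [Fintype n] [DecidableEq n] (A : Matrix n n ℂ)
    (f : ℝ → ℝ) : Matrix n n ℂ :=
  if hA : A.IsHermitian then
    (hA.eigenvectorUnitary : Matrix n n ℂ) *
      Matrix.diagonal (fun i => (f (hA.eigenvalues i) : ℂ)) *
      (star ((hA.eigenvectorUnitary : Matrix n n ℂ)))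
  else 0

/-- Projector onto the strictly negative eigenspaces of a Hermitian matrix. -/
noncomputable def negProj {n : Type*} [Fintype n] [DecidableEq n] (A : Matrix n n ℂ) :
    Matrix n n ℂ :=
  cfcHerm A (fun x => if x < 0 then 1 else 0)

/-- Projector onto the nonnegative eigenspaces of a Hermitian matrix. -/
noncomputable def posProj {n : Type*} [Fintype n] [DecidableEq n] (A : Matrix n n ℂ) :
    Matrix n n ℂ :=
  cfcHerm A (fun x => if 0 ≤ x then 1 else 0)

/-- Partial trace over the second (right) factor. -/
noncomputable def ptraceRight {a b : Type*} [Fintype a] [Fintype b]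
    (M : Matrix (a × b) (a × b) ℂ) : Matrix a a ℂ :=
  Matrix.of fun i j => ∑ k, M (i, k) (j, k)

/-- Partial trace over the first (left) factor. -/
noncomputable def ptraceLeft {a b : Type*} [Fintype a] [Fintype b]
    (M : Matrix (a × b) (a × b) ℂ) : Matrix b b ℂ :=
  Matrix.of fun i j => ∑ k, M (k, i) (k, j)

/-- Conditional min-entropy `H_min(A|B)_ρ`, conditioning on the second factor. -/
noncomputable def Hmin {a b : Type*} [Fintype a] [Fintype b] [DecidableEq a] [DecidableEq b]
    (ρ : Matrix (a × b) (a × b) ℂ) : ℝ :=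
  sSup {l : ℝ | ∃ σ : Matrix b b ℂ, SubNormalized σ ∧
    mLE ρ ((((2 : ℝ) ^ (-l) : ℝ)) • ((1 : Matrix a a ℂ) ⊗ₖ σ))}

/-- Relative conditional max-entropy `H_max(A|B)_{ρ|σ}`. -/
noncomputable def HmaxRel {a b : Type*} [Fintype a] [Fintype b] [DecidableEq a] [DecidableEq b]
    (ρ : Matrix (a × b) (a × b) ℂ) (σ : Matrix b b ℂ) : ℝ :=
  Real.logb 2 ((fidelity ρ ((1 : Matrix a a ℂ) ⊗ₖ σ)) ^ 2)

/-- Conditional max-entropy `H_max(A|B)_ρ`. -/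
noncomputable def Hmax {a b : Type*} [Fintype a] [Fintype b] [DecidableEq a] [DecidableEq b]
    (ρ : Matrix (a × b) (a × b) ℂ) : ℝ :=
  sSup {x : ℝ | ∃ σ : Matrix b b ℂ, SubNormalized σ ∧ x = HmaxRel ρ σ}

/-- Smooth conditional min-entropy. -/
noncomputable def sHmin {a b : Type*} [Fintype a] [Fintype b] [DecidableEq a] [DecidableEq b]
    (ε : ℝ) (ρ : Matrix (a × b) (a × b) ℂ) : ℝ :=
  sSup {x : ℝ | ∃ ρ' : Matrix (a × b) (a × b) ℂ,
    SubNormalized ρ' ∧ pDist ρ' ρ ≤ ε ∧ x = Hmin ρ'}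

/-- Smooth conditional max-entropy. -/
noncomputable def sHmax {a b : Type*} [Fintype a] [Fintype b] [DecidableEq a] [DecidableEq b]
    (ε : ℝ) (ρ : Matrix (a × b) (a × b) ℂ) : ℝ :=
  sInf {x : ℝ | ∃ ρ' : Matrix (a × b) (a × b) ℂ,
    SubNormalized ρ' ∧ pDist ρ' ρ ≤ ε ∧ x = Hmax ρ'}

/-- Operator norm of a Hermitian (in particular PSD) matrix: largest eigenvalue. -/
noncomputable def opNormPSD {n : Type*} [Fintype n] [DecidableEq n] (A : Matrix n n ℂ) : ℝ :=
  if hA : A.IsHermitian then ⨆ i, hA.eigenvalues i else 0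

end QIT

section
open scoped MatrixOrder
namespace Matrix.PosSemidef
variable {n : Type*} [Fintype n] [DecidableEq n] {A : Matrix n n ℂ}

noncomputable def sqrt (h : A.PosSemidef) : Matrix n n ℂ :=
  (h.1.eigenvectorUnitary : Matrix n n ℂ) *
      Matrix.diagonal ((↑) ∘ (fun x : ℝ => Real.sqrt x) ∘ h.1.eigenvalues) *
      (star h.1.eigenvectorUnitary : Matrix n n ℂ)

lemma sqrt_eq_cfcSqrt (h : A.PosSemidef) : h.sqrt = CFC.sqrt A := by
  have h0 : 0 ≤ A := h.nonneg
  rw [CFC.sqrt_eq_real_sqrt A h0, cfcₙ_eq_cfc (hf0 := Real.sqrt_zero), h.1.cfc_eq, IsHermitian.cfc, Unitary.conjStarAlgAut_apply]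
  rfl

lemma posSemidef_sqrt (h : A.PosSemidef) : h.sqrt.PosSemidef := by
  rw [sqrt_eq_cfcSqrt]
  exact (CFC.sqrt_nonneg A).posSemidef

lemma sqrt_mul_self (h : A.PosSemidef) : h.sqrt * h.sqrt = A := by
  rw [sqrt_eq_cfcSqrt]
  exact CFC.sqrt_mul_sqrt_self A h.nonneg

lemma eq_sqrt_of_sq_eq {B : Matrix n n ℂ} (hA : A.PosSemidef) (hB : B.PosSemidef)
    (hAB : A ^ 2 = B) : A = hB.sqrt := by
  rw [sqrt_eq_cfcSqrt, ← hAB, CFC.sqrt_sq A hA.nonneg]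

end Matrix.PosSemidef
end

namespace StmtAux

lemma trace_re_nonneg {n : Type*} [Fintype n] [DecidableEq n] {M : Matrix n n ℂ}
    (hM : M.PosSemidef) : 0 ≤ M.trace.re := by
  have h : ∀ i, 0 ≤ (M i i).re := by
    intro i
    exact (Complex.le_def.mp hM.diag_nonneg).1
  simp only [Matrix.trace, Matrix.diag, Complex.re_sum]
  exact Finset.sum_nonneg fun i _ => h i

lemma mul_trace_re_nonneg {n : Type*} [Fintype n] [DecidableEq n] {A B : Matrix n n ℂ}
    (hA : A.PosSemidef) (hB : B.PosSemidef) : 0 ≤ (A * B).trace.re := by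
  set Q := hA.sqrt with hQdef
  have hQH : Qᴴ = Q := hA.posSemidef_sqrt.1
  have hpsd : (Q * B * Q).PosSemidef := by
    have := hB.mul_mul_conjTranspose_same Q
    rwa [hQH] at this
  have hQQ : Q * Q = A := hA.sqrt_mul_self
  have htr : (Q * B * Q).trace = (A * B).trace := by
    rw [Matrix.trace_mul_cycle, hQQ]
  have := trace_re_nonneg hpsd
  rwa [htr] at this

lemma scalar (s t f : ℝ) (hs0 : 0 ≤ s) (hsf : s ≤ f) (hst : s ≤ t) (ht1 : t ≤ 1)
    (ht0 : 0 < t) :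
    Real.sqrt (1 - (f + Real.sqrt ((1 - s) * (1 - t))) ^ 2) ≤
      (1 / Real.sqrt t) * Real.sqrt (t ^ 2 - s ^ 2) := by
  set w := Real.sqrt ((1 - s) * (1 - t)) with hw
  have hs1 : s ≤ 1 := hst.trans ht1
  have hw0 : 0 ≤ w := Real.sqrt_nonneg _
  have hw2 : w ^ 2 = (1 - s) * (1 - t) :=
    Real.sq_sqrt (mul_nonneg (by linarith) (by linarith))
  have hw1 : 1 - t ≤ w := by
    rw [hw]
    calc 1 - t = Real.sqrt ((1 - t) * (1 - t)) := (Real.sqrt_mul_self (by linarith)).symm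
    _ ≤ _ := Real.sqrt_le_sqrt (mul_le_mul_of_nonneg_right (by linarith) (by linarith))
  have hts : 0 ≤ t ^ 2 - s ^ 2 := by nlinarith
  have h1 : 1 - (f + w) ^ 2 ≤ 1 - (s + w) ^ 2 := by nlinarith
  have h2 : 1 - (s + w) ^ 2 ≤ (t ^ 2 - s ^ 2) / t := by
    rw [le_div_iff₀ ht0]
    nlinarith [mul_nonneg (mul_nonneg hs0 (sub_nonneg.2 hst)) (sub_nonneg.2 ht1),
      mul_nonneg (mul_nonneg hs0 ht0.le) (by linarith : (0:ℝ) ≤ w - (1 - t))]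
  calc Real.sqrt (1 - (f + w) ^ 2) ≤ Real.sqrt ((t ^ 2 - s ^ 2) / t) :=
        Real.sqrt_le_sqrt (h1.trans h2)
  _ = Real.sqrt (t ^ 2 - s ^ 2) / Real.sqrt t := Real.sqrt_div hts t
  _ = (1 / Real.sqrt t) * Real.sqrt (t ^ 2 - s ^ 2) := by ring

end StmtAux


open QIT in
/-- `P(ΠρΠ, ρ) ≤ (1/√trρ)·√((trρ)² - (tr[Π²ρ])²)` for `0 ≤ Π ≤ 1`. -/
theorem stmt4 {n : Type*} [Fintype n] [DecidableEq n] (ρ P : Matrix n n ℂ)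
    (hρpsd : ρ.PosSemidef) (htr0 : 0 < ρ.trace.re) (htr1 : ρ.trace.re ≤ 1)
    (hP0 : P.PosSemidef) (hP1 : (1 - P).PosSemidef) :
    pDist (P * ρ * P) ρ ≤
      (1 / Real.sqrt ρ.trace.re) *
        Real.sqrt ((ρ.trace.re) ^ 2 - (((P * P * ρ).trace).re) ^ 2) := by
  have hPH : Pᴴ = P := hP0.1
  set S := hρpsd.sqrt with hSdef
  have hSH : Sᴴ = S := hρpsd.posSemidef_sqrt.1
  have hSS : S * S = ρ := hρpsd.sqrt_mul_self
  have hσ : (P * ρ * P).PosSemidef := by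
    have := hρpsd.mul_mul_conjTranspose_same P
    rwa [hPH] at this
  -- B = S P S is PSD
  have hB : (S * P * S).PosSemidef := by
    have := hP0.mul_mul_conjTranspose_same S
    rwa [hSH] at this
  -- fidelity computation
  have hmsρ : msqrt ρ = S := by rw [msqrt, dif_pos hρpsd]; rfl
  have hmsσ : msqrt (P * ρ * P) = hσ.sqrt := by rw [msqrt, dif_pos hσ]; rfl
  have hTT : hσ.sqrt * hσ.sqrt = P * ρ * P := hσ.sqrt_mul_self
  have hTH : (hσ.sqrt)ᴴ = hσ.sqrt := hσ.posSemidef_sqrt.1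
  have hprod : (hσ.sqrt * S)ᴴ * (hσ.sqrt * S) = (S * P * S) * (S * P * S) := by
    rw [conjTranspose_mul, hSH, hTH, Matrix.mul_assoc, ← Matrix.mul_assoc hσ.sqrt, hTT,
      ← hSS]
    simp only [Matrix.mul_assoc]
  have hsq : ((S * P * S) * (S * P * S)).PosSemidef := by
    have := (hB.pow 2)
    rwa [pow_two] at this
  have hmsq : msqrt ((S * P * S) * (S * P * S)) = S * P * S := by
    rw [msqrt, dif_pos hsq]
    exact (hB.eq_sqrt_of_sq_eq hsq (by rw [pow_two])).symm
  have hfid : fidelity (P * ρ * P) ρ = (ρ * P).trace.re := by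
    rw [fidelity, hmsρ, hmsσ, traceNorm, hprod, hmsq]
    rw [Matrix.trace_mul_cycle, hSS]
  -- trace identities
  have htrσ : (P * ρ * P).trace = (P * P * ρ).trace := by
    rw [Matrix.trace_mul_cycle]
  -- key numbers
  set t := ρ.trace.re with ht
  set s := (P * P * ρ).trace.re with hs
  set f := (ρ * P).trace.re with hf
  -- PSD facts
  have hPP : (P * P).PosSemidef := by
    have := Matrix.posSemidef_conjTranspose_mul_self P
    rwa [hPH] at this
  have hs0 : 0 ≤ s := StmtAux.mul_trace_re_nonneg hPP hρpsd
  set Q := hP0.sqrt with hQdef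
  have hQH : Qᴴ = Q := hP0.posSemidef_sqrt.1
  have hQQ : Q * Q = P := hP0.sqrt_mul_self
  have hPmPP : (P - P * P).PosSemidef := by
    have h1 : (Q * (1 - P) * Q).PosSemidef := by
      have := hP1.mul_mul_conjTranspose_same Q
      rwa [hQH] at this
    have h2 : Q * (1 - P) * Q = P - P * P := by
      rw [← hQQ]
      noncomm_ring
    rwa [h2] at h1
  have h1mPP : ((1 : Matrix n n ℂ) - P * P).PosSemidef := by
    have := hP1.add hPmPP
    have he : (1 - P) + (P - P * P) = (1 : Matrix n n ℂ) - P * P := by noncomm_ring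
    rwa [he] at this
  have hsf : s ≤ f := by
    have h0 : 0 ≤ ((P - P * P) * ρ).trace.re := StmtAux.mul_trace_re_nonneg hPmPP hρpsd
    have he : ((P - P * P) * ρ).trace = (P * ρ).trace - (P * P * ρ).trace := by
      rw [Matrix.sub_mul, Matrix.trace_sub]
    have hc : (P * ρ).trace = (ρ * P).trace := Matrix.trace_mul_comm P ρ
    rw [he, hc] at h0
    simp only [Complex.sub_re] at h0
    linarith
  have hst : s ≤ t := by
    have h0 : 0 ≤ (((1 : Matrix n n ℂ) - P * P) * ρ).trace.re :=
      StmtAux.mul_trace_re_nonneg h1mPP hρpsd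
    have he : (((1 : Matrix n n ℂ) - P * P) * ρ).trace = ρ.trace - (P * P * ρ).trace := by
      rw [Matrix.sub_mul, Matrix.trace_sub, Matrix.one_mul]
    rw [he] at h0
    simp only [Complex.sub_re] at h0
    linarith
  -- assemble
  rw [pDist, gFid, hfid, htrσ]
  exact StmtAux.scalar s t f hs0 hsf hst htr1 htr0
end
end

section
/- Counter-example to a min-min chain rule: let d ≥ 2 and define ρ_{ABCC'} = ½(|φ⟩⟨φ|_{AB} ⊗ π_C ⊗ |0⟩⟨0|_{C'} + π_A ⊗ |φ⟩⟨φ|_{BC} ⊗ |1⟩⟨1|_{C'}), where |φ⟩ is a maximally entangled state on two d-dimensional systems and π the maximally mixed state on a d-dimensional system. Then H_min(AB|CC')_ρ = 0 and both H_min(A|BCC')_ρ and H_min(B|CC')_ρ are at most 1 - log d. -/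
open Matrix Kronecker ComplexOrder

noncomputable section


open scoped Classical
namespace QIT

/-- The state `ρ_{ABCC'} = ½(|φ⟩⟨φ|_{AB} ⊗ π_C ⊗ |0⟩⟨0| + π_A ⊗ |φ⟩⟨φ|_{BC} ⊗ |1⟩⟨1|)`,
indexed by `A × (B × (C × C'))`. -/
noncomputable def ρex (d : ℕ) :
    Matrix (Fin d × Fin d × Fin d × Fin 2) (Fin d × Fin d × Fin d × Fin 2) ℂ :=
  Matrix.of fun x y =>
    (1 / 2 : ℂ) *
      ((if x.2.2.2 = 0 ∧ y.2.2.2 = 0 then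
          ((1 : ℂ) / d) * (if x.1 = x.2.1 then 1 else 0) * (if y.1 = y.2.1 then 1 else 0) *
            (((1 : ℂ) / d) * (if x.2.2.1 = y.2.2.1 then 1 else 0))
        else 0) +
       (if x.2.2.2 = 1 ∧ y.2.2.2 = 1 then
          ((1 : ℂ) / d) * (if x.1 = y.1 then 1 else 0) *
            (((1 : ℂ) / d) * (if x.2.1 = x.2.2.1 then 1 else 0) *
              (if y.2.1 = y.2.2.1 then 1 else 0))
        else 0))


section Aux

/-- indicator-sum vector -/
noncomputable def indVec {m n : Type*} [Fintype n] [DecidableEq m] (f : n → m) : m → ℂ :=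
  fun x => ∑ i, if x = f i then 1 else 0

lemma quad_indVec {m n : Type*} [Fintype m] [Fintype n] [DecidableEq m]
    (M : Matrix m m ℂ) (f : n → m) :
    star (indVec f) ⬝ᵥ M *ᵥ indVec f = ∑ i, ∑ j, M (f i) (f j) := by
  have hstar : star (indVec f) = indVec f := by
    funext x
    simp only [indVec, Pi.star_apply, star_sum]
    refine Finset.sum_congr rfl fun i _ => ?_
    split <;> simp
  rw [hstar]
  simp only [indVec, dotProduct, mulVec, Finset.sum_mul, Finset.mul_sum, ite_mul, one_mul,
    zero_mul, mul_ite, mul_one, mul_zero]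
  have h1 : ∀ x : m, (∑ x1 : m, ∑ x2 : n, if x1 = f x2 then (∑ x3 : n, if x = f x3 then M x x1 else 0) else 0)
      = ∑ x2 : n, ∑ x3 : n, if x = f x3 then M x (f x2) else 0 := by
    intro x
    rw [Finset.sum_comm]
    simp [Finset.sum_ite_eq']
  simp only [h1]
  rw [Finset.sum_comm]
  have h2 : ∀ x2 : n, (∑ x : m, ∑ x3 : n, if x = f x3 then M x (f x2) else 0)
      = ∑ x3 : n, M (f x3) (f x2) := by
    intro x2
    rw [Finset.sum_comm]
    simp [Finset.sum_ite_eq']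
  simp only [h2]
  exact Finset.sum_comm

lemma psd_smul_real {n : Type*} [Fintype n] {M : Matrix n n ℂ} (h : M.PosSemidef) {c : ℝ}
    (hc : 0 ≤ c) : ((c : ℂ) • M).PosSemidef := by
  refine Matrix.PosSemidef.of_dotProduct_mulVec_nonneg ?_ fun x => ?_
  · unfold Matrix.IsHermitian
    rw [conjTranspose_smul, h.1]
    congr 1
    simp [Complex.ext_iff]
  · rw [smul_mulVec, dotProduct_smul, smul_eq_mul]
    exact mul_nonneg (by exact_mod_cast Complex.zero_le_real.mpr hc) (h.dotProduct_mulVec_nonneg x)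

lemma psd_of_idem {n : Type*} [Fintype n] [DecidableEq n] {Q : Matrix n n ℂ}
    (h1 : Qᴴ = Q) (h2 : Q * Q = Q) : Q.PosSemidef := by
  have h : Q = Qᴴ * Q := by rw [h1, h2]
  rw [h]
  exact Matrix.posSemidef_conjTranspose_mul_self Q

lemma psd_one_sub_gram {m k : Type*} [Fintype m] [Fintype k] [DecidableEq m] [DecidableEq k]
    (V : Matrix m k ℂ) (d : ℕ) (hd : d ≠ 0) (hV : Vᴴ * V = (d : ℂ) • 1) :
    ((1 : Matrix m m ℂ) - ((d : ℂ))⁻¹ • (V * Vᴴ)).PosSemidef := by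
  have hdc : (d : ℂ) ≠ 0 := Nat.cast_ne_zero.mpr hd
  have hAA : (V * Vᴴ) * (V * Vᴴ) = (d : ℂ) • (V * Vᴴ) := by
    calc (V * Vᴴ) * (V * Vᴴ) = V * (Vᴴ * V) * Vᴴ := by
          rw [Matrix.mul_assoc, Matrix.mul_assoc, Matrix.mul_assoc]
      _ = (d : ℂ) • (V * Vᴴ) := by
          rw [hV, Matrix.mul_smul, Matrix.mul_one, Matrix.smul_mul]
  refine psd_of_idem ?_ ?_
  · rw [conjTranspose_sub, conjTranspose_one, conjTranspose_smul, conjTranspose_mul,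
      conjTranspose_conjTranspose]
    congr 1
    simp [Complex.ext_iff]
  · have key : ((d:ℂ)⁻¹ • (V * Vᴴ)) * ((d:ℂ)⁻¹ • (V * Vᴴ)) = (d:ℂ)⁻¹ • (V * Vᴴ) := by
      rw [Matrix.smul_mul, Matrix.mul_smul, hAA, smul_smul, smul_smul]
      congr 1
      field_simp
    rw [Matrix.sub_mul, Matrix.mul_sub, Matrix.mul_sub, Matrix.one_mul, Matrix.mul_one, key]
    simp

lemma diag_re_nonneg {n : Type*} [Fintype n] [DecidableEq n] {σ : Matrix n n ℂ}
    (h : σ.PosSemidef) (j : n) : 0 ≤ (σ j j).re := by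
  have := h.re_dotProduct_nonneg (Pi.single j 1)
  simpa [dotProduct, Matrix.mulVec, Pi.single_apply, Finset.sum_ite_eq] using this

lemma quad_re_le {m n : Type*} [Fintype m] [Fintype n] [DecidableEq m]
    {A B : Matrix m m ℂ} (h : (B - A).PosSemidef) (f : n → m) :
    (∑ i : n, ∑ j : n, A (f i) (f j)).re ≤ (∑ i : n, ∑ j : n, B (f i) (f j)).re := by
  have h0 := h.dotProduct_mulVec_nonneg (indVec f)
  rw [Matrix.sub_mulVec, dotProduct_sub, quad_indVec, quad_indVec] at h0
  have h1 := (Complex.le_def.mp h0).1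
  simp only [Complex.zero_re, Complex.sub_re] at h1
  linarith

/-- real smul on a complex matrix is complex smul -/
lemma real_smul_matrix {n m : Type*} (r : ℝ) (M : Matrix n m ℂ) :
    r • M = ((r : ℂ)) • M := by
  ext i j
  simp [Complex.real_smul]

/-- Gram-factor of `ρex` -/
noncomputable def Wfull (d : ℕ) : Matrix (Fin d × Fin d × Fin d × Fin 2) (Fin d ⊕ Fin d) ℂ :=
  fun x u => match u with
  | .inl c => if x.1 = x.2.1 ∧ x.2.2.1 = c ∧ x.2.2.2 = 0 then 1 else 0
  | .inr a => if x.1 = a ∧ x.2.1 = x.2.2.1 ∧ x.2.2.2 = 1 then 1 else 0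

lemma Wfull_gram (d : ℕ) : (Wfull d)ᴴ * (Wfull d) = (d : ℂ) • 1 := by
  ext u u'
  cases u <;> cases u' <;>
    simp [Wfull, Matrix.mul_apply, Matrix.conjTranspose_apply, Fintype.sum_prod_type,
      Fin.sum_univ_two, Matrix.one_apply, apply_ite, Finset.sum_ite_eq, Finset.sum_ite_eq',
      ite_and, Finset.mul_sum, Finset.sum_mul] <;>
    (split <;> simp_all [eq_comm])

lemma rhoex_eq (d : ℕ) (hd : 2 ≤ d) :
    ρex d = ((1 : ℂ) / (2 * d * d)) • (Wfull d * (Wfull d)ᴴ) := by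
  have hdc : (d : ℂ) ≠ 0 := Nat.cast_ne_zero.mpr (by omega)
  have h2 : ∀ g : Fin 2, g = 0 ∨ g = 1 := by decide
  ext ⟨a, b, c, g⟩ ⟨a', b', c', g'⟩
  rcases h2 g with rfl | rfl <;> rcases h2 g' with rfl | rfl <;>
    simp [ρex, Wfull, Matrix.mul_apply, Matrix.conjTranspose_apply, Fintype.sum_sum_type,
      Finset.sum_ite_eq, Finset.sum_ite_eq', ite_and, Matrix.smul_apply,
      Finset.mul_sum, Finset.sum_mul] <;>
    split_ifs <;> simp_all <;> field_simp <;> ring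

/-- Gram-factor of the entangled part of `ptraceLeft (ρex d)` -/
noncomputable def Uvec (d : ℕ) : Matrix (Fin d × Fin d × Fin 2) Unit ℂ :=
  fun x _ => if x.1 = x.2.1 ∧ x.2.2 = 1 then 1 else 0

lemma Uvec_gram (d : ℕ) : (Uvec d)ᴴ * (Uvec d) = (d : ℂ) • 1 := by
  ext u u'
  simp [Uvec, Matrix.mul_apply, Matrix.conjTranspose_apply, Fintype.sum_prod_type,
    Fin.sum_univ_two, Matrix.one_apply, ite_and, Finset.sum_ite_eq, Finset.sum_ite_eq']

lemma ptrace_rhoex_eq (d : ℕ) (hd : 2 ≤ d) :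
    (1 : Matrix (Fin d × Fin d × Fin 2) (Fin d × Fin d × Fin 2) ℂ) - ptraceLeft (ρex d) =
      Matrix.diagonal (fun x => (((if x.2.2 = 0 then
          1/2 - 1/(2*(d:ℝ)*(d:ℝ)) else (1/2 : ℝ)) : ℝ) : ℂ)) +
        ((1 : ℂ)/2) • ((1 : Matrix _ _ ℂ) - ((d : ℂ))⁻¹ • (Uvec d * (Uvec d)ᴴ)) := by
  have hdc : (d : ℂ) ≠ 0 := Nat.cast_ne_zero.mpr (by omega)
  have h2 : ∀ g : Fin 2, g = 0 ∨ g = 1 := by decide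
  ext ⟨b, c, g⟩ ⟨b', c', g'⟩
  rcases h2 g with rfl | rfl <;> rcases h2 g' with rfl | rfl <;>
    simp [ptraceLeft, ρex, Uvec, Matrix.mul_apply, Matrix.conjTranspose_apply,
      Matrix.one_apply, Matrix.diagonal_apply, Matrix.smul_apply, Matrix.sub_apply,
      ite_and, Finset.sum_ite_eq, Finset.sum_ite_eq', Prod.ext_iff, Finset.mul_sum,
      Finset.sum_mul] <;>
    split_ifs <;> simp_all <;> field_simp <;> ring

end Aux


lemma arith_bound {d : ℕ} (hd : 2 ≤ d) {l : ℝ} (h : (d:ℝ)/2 ≤ (2:ℝ)^(-l)) :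
    l ≤ 1 - Real.logb 2 d := by
  have hd0 : (0:ℝ) < (d:ℝ)/2 := by
    have : (0:ℝ) < d := by exact_mod_cast (by omega : 0 < d)
    linarith
  have h1 : Real.logb 2 ((d:ℝ)/2) ≤ Real.logb 2 ((2:ℝ)^(-l)) :=
    (Real.logb_le_logb one_lt_two hd0 (Real.rpow_pos_of_pos two_pos _)).mpr h
  rw [Real.logb_rpow (by norm_num) (by norm_num)] at h1
  rw [Real.logb_div (by positivity) (by norm_num),
    Real.logb_self_eq_one (by norm_num)] at h1
  linarith

theorem hmin_rhoex_le (d : ℕ) (hd : 2 ≤ d) : Hmin (ρex d) ≤ 1 - Real.logb 2 d := by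
  have hd0 : d ≠ 0 := by omega
  have hdc : (d:ℂ) ≠ 0 := Nat.cast_ne_zero.mpr hd0
  have hdR : (0:ℝ) < d := by exact_mod_cast Nat.pos_of_ne_zero hd0
  -- every element of the set is at most 1 - logb 2 d
  have ub : ∀ l ∈ {l : ℝ | ∃ σ : Matrix (Fin d × Fin d × Fin 2) (Fin d × Fin d × Fin 2) ℂ,
      SubNormalized σ ∧ mLE (ρex d) ((((2:ℝ)^(-l) : ℝ)) • ((1 : Matrix (Fin d) (Fin d) ℂ) ⊗ₖ σ))},
      l ≤ 1 - Real.logb 2 d := by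
    rintro l ⟨σ, ⟨hσp, hσt⟩, hm⟩
    have hcpos : (0:ℝ) < (2:ℝ)^(-l) := Real.rpow_pos_of_pos two_pos _
    have key : ∀ k : Fin d,
        (1:ℝ)/2 ≤ (2:ℝ)^(-l) * (∑ a : Fin d, (σ (a, k, 0) (a, k, 0)).re) := by
      intro k
      have h := quad_re_le hm (fun a : Fin d => (a, (a, k, (0 : Fin 2))))
      have hA : (∑ i : Fin d, ∑ j : Fin d,
          ρex d (i, (i, k, 0)) (j, (j, k, 0))) = (((1:ℝ)/2 : ℝ) : ℂ) := by
        have he : ∀ i j : Fin d, ρex d (i, (i, k, 0)) (j, (j, k, 0)) = 1/(2*(d:ℂ)*(d:ℂ)) := by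
          intro i j
          simp [ρex]
          field_simp
        simp only [he, Finset.sum_const, Finset.card_univ, Fintype.card_fin, nsmul_eq_mul]
        push_cast
        field_simp
      have hB : (∑ i : Fin d, ∑ j : Fin d,
          ((((2:ℝ)^(-l) : ℝ) • ((1 : Matrix (Fin d) (Fin d) ℂ) ⊗ₖ σ))
            (i, (i, k, 0)) (j, (j, k, 0))))
          = (((2:ℝ)^(-l) : ℝ) : ℂ) * ∑ a : Fin d, σ (a, k, 0) (a, k, 0) := by
        simp only [Matrix.smul_apply, Matrix.kroneckerMap_apply, Matrix.one_apply,
          Complex.real_smul]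
        simp [ite_mul, mul_ite, Finset.sum_ite_eq, Finset.sum_ite_eq', Finset.mul_sum]
      rw [hA, hB] at h
      rw [Complex.ofReal_re, Complex.re_ofReal_mul, Complex.re_sum] at h
      exact h
    -- trace bound
    have hdiag : ∀ j, 0 ≤ (σ j j).re := diag_re_nonneg hσp
    have htr : (∑ k : Fin d, ∑ a : Fin d, (σ (a, k, 0) (a, k, 0)).re) ≤ 1 := by
      have h1 : σ.trace.re = ∑ a : Fin d, ∑ k : Fin d,
          ((σ (a, k, 0) (a, k, 0)).re + (σ (a, k, 1) (a, k, 1)).re) := by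
        rw [Matrix.trace, Complex.re_sum]
        rw [Fintype.sum_prod_type]
        refine Finset.sum_congr rfl fun a _ => ?_
        rw [Fintype.sum_prod_type]
        refine Finset.sum_congr rfl fun k _ => ?_
        simp [Fin.sum_univ_two, Matrix.diag]
      have h2 : ∑ a : Fin d, ∑ k : Fin d, (σ (a, k, 0) (a, k, 0)).re ≤ σ.trace.re := by
        rw [h1]
        refine Finset.sum_le_sum fun a _ => Finset.sum_le_sum fun k _ => ?_
        have := hdiag (a, k, 1)
        linarith
      rw [Finset.sum_comm]
      linarith
    -- combine
    have hsum : (d:ℝ)/2 ≤ (2:ℝ)^(-l) *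
        (∑ k : Fin d, ∑ a : Fin d, (σ (a, k, 0) (a, k, 0)).re) := by
      have h3 : ∑ k : Fin d, ((1:ℝ)/2) ≤
          ∑ k : Fin d, (2:ℝ)^(-l) * (∑ a : Fin d, (σ (a, k, 0) (a, k, 0)).re) :=
        Finset.sum_le_sum fun k _ => key k
      rw [Finset.sum_const, Finset.card_univ, Fintype.card_fin, ← Finset.mul_sum] at h3
      calc (d:ℝ)/2 = (d:ℕ) • ((1:ℝ)/2) := by
            simp [nsmul_eq_mul]
            ring
        _ ≤ _ := h3
    have hfin : (d:ℝ)/2 ≤ (2:ℝ)^(-l) := by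
      have hnn : 0 ≤ ∑ k : Fin d, ∑ a : Fin d, (σ (a, k, 0) (a, k, 0)).re :=
        Finset.sum_nonneg fun k _ => Finset.sum_nonneg fun a _ => hdiag _
      nlinarith
    exact arith_bound hd hfin
  -- nonemptiness
  have hmem : (-Real.logb 2 (2*(d:ℝ)*(d:ℝ))) ∈ {l : ℝ | ∃ σ : Matrix (Fin d × Fin d × Fin 2) (Fin d × Fin d × Fin 2) ℂ,
      SubNormalized σ ∧ mLE (ρex d) ((((2:ℝ)^(-l) : ℝ)) • ((1 : Matrix (Fin d) (Fin d) ℂ) ⊗ₖ σ))} := by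
    refine ⟨((1:ℝ)/(2*(d:ℝ)*(d:ℝ))) • (1 : Matrix (Fin d × Fin d × Fin 2) (Fin d × Fin d × Fin 2) ℂ), ⟨?_, ?_⟩, ?_⟩
    · rw [real_smul_matrix]
      exact psd_smul_real Matrix.PosSemidef.one (by positivity)
    · rw [Matrix.trace_smul, Matrix.trace_one]
      simp only [Complex.smul_re]
      have : ((Fintype.card (Fin d × Fin d × Fin 2) : ℂ)).re = (Fintype.card (Fin d × Fin d × Fin 2) : ℝ) := by
        simp
      rw [this]
      simp only [Fintype.card_prod, Fintype.card_fin, smul_eq_mul]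
      push_cast
      rw [div_mul_eq_mul_div, one_mul, div_le_one (by positivity)]
      nlinarith
    · unfold mLE
      have hcl : (2:ℝ)^(-(-Real.logb 2 (2*(d:ℝ)*(d:ℝ)))) = 2*(d:ℝ)*(d:ℝ) := by
        rw [neg_neg]
        exact Real.rpow_logb (by norm_num) (by norm_num) (by positivity)
      rw [hcl]
      have hkron : ((1 : Matrix (Fin d) (Fin d) ℂ) ⊗ₖ
          (((1:ℝ)/(2*(d:ℝ)*(d:ℝ))) • (1 : Matrix (Fin d × Fin d × Fin 2) (Fin d × Fin d × Fin 2) ℂ)))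
          = (((1:ℝ)/(2*(d:ℝ)*(d:ℝ)) : ℝ) : ℂ) • (1 : Matrix (Fin d × (Fin d × Fin d × Fin 2)) (Fin d × (Fin d × Fin d × Fin 2)) ℂ) := by
        rw [real_smul_matrix, Matrix.kronecker_smul, Matrix.one_kronecker_one]
      rw [hkron, real_smul_matrix, smul_smul]
      have hone : ((2*(d:ℝ)*(d:ℝ) : ℝ) : ℂ) * (((1:ℝ)/(2*(d:ℝ)*(d:ℝ)) : ℝ) : ℂ) = 1 := by
        push_cast
        field_simp
      rw [hone, one_smul, rhoex_eq d hd]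
      have hdec : (1 : Matrix (Fin d × Fin d × Fin d × Fin 2) (Fin d × Fin d × Fin d × Fin 2) ℂ) -
          ((1:ℂ)/(2*(d:ℂ)*(d:ℂ))) • (Wfull d * (Wfull d)ᴴ)
          = (((1 - 1/(2*(d:ℝ)) : ℝ)) : ℂ) • 1 +
            (((1/(2*(d:ℝ)) : ℝ)) : ℂ) • ((1 : Matrix _ _ ℂ) - ((d:ℂ))⁻¹ • (Wfull d * (Wfull d)ᴴ)) := by
        match_scalars <;> push_cast <;> field_simp <;> ring
      rw [hdec]
      refine Matrix.PosSemidef.add ?_ ?_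
      · refine psd_smul_real Matrix.PosSemidef.one ?_
        have hd1 : (1:ℝ) ≤ d := by exact_mod_cast (by omega : 1 ≤ d)
        have h1 : 1/(2*(d:ℝ)) ≤ 1 := by
          rw [div_le_one (by positivity)]
          nlinarith
        linarith
      · exact psd_smul_real (psd_one_sub_gram (Wfull d) d hd0 (Wfull_gram d)) (by positivity)
  unfold Hmin
  exact csSup_le ⟨_, hmem⟩ ub


theorem hmin_ptrace_le (d : ℕ) (hd : 2 ≤ d) :
    Hmin (ptraceLeft (ρex d)) ≤ 1 - Real.logb 2 d := by
  have hd0 : d ≠ 0 := by omega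
  have hdc : (d:ℂ) ≠ 0 := Nat.cast_ne_zero.mpr hd0
  have hdR : (0:ℝ) < d := by exact_mod_cast Nat.pos_of_ne_zero hd0
  have ub : ∀ l ∈ {l : ℝ | ∃ σ : Matrix (Fin d × Fin 2) (Fin d × Fin 2) ℂ,
      SubNormalized σ ∧ mLE (ptraceLeft (ρex d))
        ((((2:ℝ)^(-l) : ℝ)) • ((1 : Matrix (Fin d) (Fin d) ℂ) ⊗ₖ σ))},
      l ≤ 1 - Real.logb 2 d := by
    rintro l ⟨σ, ⟨hσp, hσt⟩, hm⟩
    have hcpos : (0:ℝ) < (2:ℝ)^(-l) := Real.rpow_pos_of_pos two_pos _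
    have h := quad_re_le hm (fun b : Fin d => ((b, b, (1 : Fin 2)) : Fin d × Fin d × Fin 2))
    have hA : (∑ i : Fin d, ∑ j : Fin d,
        ptraceLeft (ρex d) (i, i, 1) (j, j, 1)) = (((d:ℝ)/2 : ℝ) : ℂ) := by
      have he : ∀ i j : Fin d, ptraceLeft (ρex d) (i, i, 1) (j, j, 1) = 1/(2*(d:ℂ)) := by
        intro i j
        simp [ptraceLeft, ρex, Finset.sum_const, Finset.card_univ]
        field_simp
      simp only [he, Finset.sum_const, Finset.card_univ, Fintype.card_fin, nsmul_eq_mul]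
      push_cast
      field_simp
    have hB : (∑ i : Fin d, ∑ j : Fin d,
        ((((2:ℝ)^(-l) : ℝ) • ((1 : Matrix (Fin d) (Fin d) ℂ) ⊗ₖ σ)) (i, i, 1) (j, j, 1)))
        = (((2:ℝ)^(-l) : ℝ) : ℂ) * ∑ b : Fin d, σ (b, 1) (b, 1) := by
      simp only [Matrix.smul_apply, Matrix.kroneckerMap_apply, Matrix.one_apply,
        Complex.real_smul]
      simp [ite_mul, mul_ite, Finset.sum_ite_eq, Finset.sum_ite_eq', Finset.mul_sum]
    rw [hA, hB] at h
    rw [Complex.ofReal_re, Complex.re_ofReal_mul, Complex.re_sum] at h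
    have hdiag : ∀ j, 0 ≤ (σ j j).re := diag_re_nonneg hσp
    have htr : (∑ b : Fin d, (σ (b, 1) (b, 1)).re) ≤ 1 := by
      have h1 : σ.trace.re = ∑ b : Fin d,
          ((σ (b, 0) (b, 0)).re + (σ (b, 1) (b, 1)).re) := by
        rw [Matrix.trace, Complex.re_sum, Fintype.sum_prod_type]
        refine Finset.sum_congr rfl fun b _ => ?_
        simp [Fin.sum_univ_two, Matrix.diag]
      have h2 : ∑ b : Fin d, (σ (b, 1) (b, 1)).re ≤ σ.trace.re := by
        rw [h1]
        refine Finset.sum_le_sum fun b _ => ?_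
        have := hdiag (b, 0)
        linarith
      linarith
    have hfin : (d:ℝ)/2 ≤ (2:ℝ)^(-l) := by
      have hnn : 0 ≤ ∑ b : Fin d, (σ (b, 1) (b, 1)).re :=
        Finset.sum_nonneg fun b _ => hdiag _
      nlinarith
    exact arith_bound hd hfin
  have hmem : (-Real.logb 2 (2*(d:ℝ))) ∈ {l : ℝ | ∃ σ : Matrix (Fin d × Fin 2) (Fin d × Fin 2) ℂ,
      SubNormalized σ ∧ mLE (ptraceLeft (ρex d))
        ((((2:ℝ)^(-l) : ℝ)) • ((1 : Matrix (Fin d) (Fin d) ℂ) ⊗ₖ σ))} := by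
    refine ⟨((1:ℝ)/(2*(d:ℝ))) • (1 : Matrix (Fin d × Fin 2) (Fin d × Fin 2) ℂ), ⟨?_, ?_⟩, ?_⟩
    · rw [real_smul_matrix]
      exact psd_smul_real Matrix.PosSemidef.one (by positivity)
    · rw [Matrix.trace_smul, Matrix.trace_one]
      simp only [Complex.smul_re]
      have hcard : ((Fintype.card (Fin d × Fin 2) : ℂ)).re = (Fintype.card (Fin d × Fin 2) : ℝ) := by
        simp
      rw [hcard]
      simp only [Fintype.card_prod, Fintype.card_fin, smul_eq_mul]
      push_cast
      rw [div_mul_eq_mul_div, one_mul, div_le_one (by positivity)]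
      nlinarith
    · unfold mLE
      have hcl : (2:ℝ)^(-(-Real.logb 2 (2*(d:ℝ)))) = 2*(d:ℝ) := by
        rw [neg_neg]
        exact Real.rpow_logb (by norm_num) (by norm_num) (by positivity)
      rw [hcl]
      have hkron : ((1 : Matrix (Fin d) (Fin d) ℂ) ⊗ₖ
          (((1:ℝ)/(2*(d:ℝ))) • (1 : Matrix (Fin d × Fin 2) (Fin d × Fin 2) ℂ)))
          = (((1:ℝ)/(2*(d:ℝ)) : ℝ) : ℂ) • (1 : Matrix (Fin d × (Fin d × Fin 2)) (Fin d × (Fin d × Fin 2)) ℂ) := by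
        rw [real_smul_matrix, Matrix.kronecker_smul, Matrix.one_kronecker_one]
      rw [hkron, real_smul_matrix, smul_smul]
      have hone : ((2*(d:ℝ) : ℝ) : ℂ) * (((1:ℝ)/(2*(d:ℝ)) : ℝ) : ℂ) = 1 := by
        push_cast
        field_simp
      rw [hone, one_smul, ptrace_rhoex_eq d hd]
      refine Matrix.PosSemidef.add ?_ ?_
      · refine Matrix.PosSemidef.diagonal ?_
        intro x
        dsimp only
        split
        · refine Complex.zero_le_real.mpr ?_
          have hd1 : (1:ℝ) ≤ d := by exact_mod_cast (by omega : 1 ≤ d)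
          have h1 : 1/(2*(d:ℝ)*(d:ℝ)) ≤ 1/2 := by
            rw [div_le_div_iff₀ (by positivity) (by norm_num)]
            nlinarith
          linarith
        · exact Complex.zero_le_real.mpr (by norm_num)
      · have hhalf : ((1:ℂ)/2) = (((1/2 : ℝ)) : ℂ) := by norm_num
        rw [hhalf]
        exact psd_smul_real (psd_one_sub_gram (Uvec d) d hd0 (Uvec_gram d)) (by norm_num)
  unfold Hmin
  exact csSup_le ⟨_, hmem⟩ ub


theorem hmin_assoc_eq (d : ℕ) (hd : 2 ≤ d) :
    Hmin ((ρex d).submatrix ⇑(Equiv.prodAssoc (Fin d) (Fin d) (Fin d × Fin 2))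
        ⇑(Equiv.prodAssoc (Fin d) (Fin d) (Fin d × Fin 2))) = 0 := by
  have hd0 : d ≠ 0 := by omega
  have hdc : (d:ℂ) ≠ 0 := Nat.cast_ne_zero.mpr hd0
  have hdR : (0:ℝ) < d := by exact_mod_cast Nat.pos_of_ne_zero hd0
  set e := Equiv.prodAssoc (Fin d) (Fin d) (Fin d × Fin 2) with he
  set V : Matrix ((Fin d × Fin d) × (Fin d × Fin 2)) (Fin d ⊕ Fin d) ℂ :=
    (Wfull d).submatrix ⇑e ⇑(Equiv.refl (Fin d ⊕ Fin d)) with hV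
  have hVct : Vᴴ = ((Wfull d)ᴴ).submatrix ⇑(Equiv.refl (Fin d ⊕ Fin d)) ⇑e := by
    rw [hV, Matrix.conjTranspose_submatrix]
  have hVgram : Vᴴ * V = (d:ℂ) • 1 := by
    rw [hVct, hV, Matrix.submatrix_mul_equiv, Wfull_gram]
    simp
  have hρ' : (ρex d).submatrix ⇑e ⇑e = ((1:ℂ)/(2*(d:ℂ)*(d:ℂ))) • (V * Vᴴ) := by
    rw [rhoex_eq d hd, Matrix.submatrix_smul]
    congr 1
    try rw [hVct]
    try rw [hV]
    try rw [Matrix.submatrix_mul_equiv]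
  -- upper bound : every element of the set is ≤ 0
  have ub : ∀ l ∈ {l : ℝ | ∃ σ : Matrix (Fin d × Fin 2) (Fin d × Fin 2) ℂ,
      SubNormalized σ ∧ mLE ((ρex d).submatrix ⇑e ⇑e)
        ((((2:ℝ)^(-l) : ℝ)) • ((1 : Matrix (Fin d × Fin d) (Fin d × Fin d) ℂ) ⊗ₖ σ))},
      l ≤ 0 := by
    rintro l ⟨σ, ⟨hσp, hσt⟩, hm⟩
    have hcpos : (0:ℝ) < (2:ℝ)^(-l) := Real.rpow_pos_of_pos two_pos _
    have hdiag : ∀ j, 0 ≤ (σ j j).re := diag_re_nonneg hσp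
    have key0 : ∀ k : Fin d,
        (1:ℝ)/2 ≤ ((2:ℝ)^(-l) * d) * (σ (k, 0) (k, 0)).re := by
      intro k
      have h := quad_re_le hm
        (fun a : Fin d => (((a, a), (k, (0:Fin 2))) : (Fin d × Fin d) × (Fin d × Fin 2)))
      have hA : (∑ i : Fin d, ∑ j : Fin d,
          ((ρex d).submatrix ⇑e ⇑e) ((i, i), (k, 0)) ((j, j), (k, 0))) = (((1:ℝ)/2 : ℝ) : ℂ) := by
        have hee : ∀ i j : Fin d, ((ρex d).submatrix ⇑e ⇑e) ((i, i), (k, 0)) ((j, j), (k, 0))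
            = 1/(2*(d:ℂ)*(d:ℂ)) := by
          intro i j
          rw [Matrix.submatrix_apply]
          simp only [he, Equiv.prodAssoc_apply]
          simp [ρex]
          field_simp
        simp only [hee, Finset.sum_const, Finset.card_univ, Fintype.card_fin, nsmul_eq_mul]
        push_cast
        field_simp
      have hB : (∑ i : Fin d, ∑ j : Fin d,
          ((((2:ℝ)^(-l) : ℝ) • ((1 : Matrix (Fin d × Fin d) (Fin d × Fin d) ℂ) ⊗ₖ σ))
            ((i, i), (k, 0)) ((j, j), (k, 0))))
          = ((((2:ℝ)^(-l) * d) : ℝ) : ℂ) * σ (k, 0) (k, 0) := by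
        simp only [Matrix.smul_apply, Matrix.kroneckerMap_apply, Matrix.one_apply,
          Complex.real_smul, Prod.mk.injEq]
        simp [ite_mul, mul_ite, Finset.sum_ite_eq, Finset.sum_ite_eq', Finset.mul_sum,
          Finset.sum_const, Finset.card_univ]
        push_cast
        ring
      rw [hA, hB] at h
      rw [Complex.ofReal_re, Complex.re_ofReal_mul] at h
      exact h
    have key1 : (1:ℝ)/2 ≤ (2:ℝ)^(-l) * (∑ b : Fin d, (σ (b, 1) (b, 1)).re) := by
      have h := quad_re_le hm
        (fun b : Fin d => (((⟨0, by omega⟩, b), (b, (1:Fin 2))) : (Fin d × Fin d) × (Fin d × Fin 2)))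
      have hA : (∑ i : Fin d, ∑ j : Fin d,
          ((ρex d).submatrix ⇑e ⇑e) ((⟨0, by omega⟩, i), (i, 1)) ((⟨0, by omega⟩, j), (j, 1)))
            = (((1:ℝ)/2 : ℝ) : ℂ) := by
        have hee : ∀ i j : Fin d,
            ((ρex d).submatrix ⇑e ⇑e) ((⟨0, by omega⟩, i), (i, 1)) ((⟨0, by omega⟩, j), (j, 1))
            = 1/(2*(d:ℂ)*(d:ℂ)) := by
          intro i j
          rw [Matrix.submatrix_apply]
          simp only [he, Equiv.prodAssoc_apply]
          simp [ρex]
          field_simp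
        simp only [hee, Finset.sum_const, Finset.card_univ, Fintype.card_fin, nsmul_eq_mul]
        push_cast
        field_simp
      have hB : (∑ i : Fin d, ∑ j : Fin d,
          ((((2:ℝ)^(-l) : ℝ) • ((1 : Matrix (Fin d × Fin d) (Fin d × Fin d) ℂ) ⊗ₖ σ))
            ((⟨0, by omega⟩, i), (i, 1)) ((⟨0, by omega⟩, j), (j, 1))))
          = (((2:ℝ)^(-l) : ℝ) : ℂ) * ∑ b : Fin d, σ (b, 1) (b, 1) := by
        simp only [Matrix.smul_apply, Matrix.kroneckerMap_apply, Matrix.one_apply,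
          Complex.real_smul, Prod.mk.injEq]
        simp [ite_mul, mul_ite, Finset.sum_ite_eq, Finset.sum_ite_eq', Finset.mul_sum]
      rw [hA, hB] at h
      rw [Complex.ofReal_re, Complex.re_ofReal_mul, Complex.re_sum] at h
      exact h
    -- combine with trace bound
    have htr : σ.trace.re ≤ 1 := hσt
    have htr2 : σ.trace.re = ∑ b : Fin d,
        ((σ (b, 0) (b, 0)).re + (σ (b, 1) (b, 1)).re) := by
      rw [Matrix.trace, Complex.re_sum, Fintype.sum_prod_type]
      refine Finset.sum_congr rfl fun b _ => ?_
      simp [Fin.sum_univ_two, Matrix.diag]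
    have hs0 : (d:ℝ) * ((1:ℝ)/2) ≤ ((2:ℝ)^(-l) * d) *
        (∑ b : Fin d, (σ (b, 0) (b, 0)).re) := by
      have h3 : ∑ _b : Fin d, ((1:ℝ)/2) ≤
          ∑ b : Fin d, ((2:ℝ)^(-l) * d) * (σ (b, 0) (b, 0)).re :=
        Finset.sum_le_sum fun b _ => key0 b
      rw [Finset.sum_const, Finset.card_univ, Fintype.card_fin, ← Finset.mul_sum] at h3
      calc (d:ℝ) * ((1:ℝ)/2) = (d:ℕ) • ((1:ℝ)/2) := by simp [nsmul_eq_mul]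
        _ ≤ _ := h3
    have hsum0 : (1:ℝ)/2 ≤ (2:ℝ)^(-l) * (∑ b : Fin d, (σ (b, 0) (b, 0)).re) := by
      have := hs0
      rw [mul_comm ((2:ℝ)^(-l)) (d:ℝ), mul_assoc] at this
      nlinarith
    have hone : (1:ℝ) ≤ (2:ℝ)^(-l) := by
      have e0 : 0 ≤ ∑ b : Fin d, (σ (b, 0) (b, 0)).re :=
        Finset.sum_nonneg fun b _ => hdiag _
      have e1 : 0 ≤ ∑ b : Fin d, (σ (b, 1) (b, 1)).re :=
        Finset.sum_nonneg fun b _ => hdiag _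
      have hT : (∑ b : Fin d, (σ (b, 0) (b, 0)).re) + (∑ b : Fin d, (σ (b, 1) (b, 1)).re) ≤ 1 := by
        rw [htr2] at htr
        rw [← Finset.sum_add_distrib]
        exact htr
      nlinarith
    have h1 : Real.logb 2 (1:ℝ) ≤ Real.logb 2 ((2:ℝ)^(-l)) :=
      (Real.logb_le_logb one_lt_two one_pos hcpos).mpr hone
    rw [Real.logb_one, Real.logb_rpow (by norm_num) (by norm_num)] at h1
    linarith
  -- membership of 0
  have hmem : (0:ℝ) ∈ {l : ℝ | ∃ σ : Matrix (Fin d × Fin 2) (Fin d × Fin 2) ℂ,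
      SubNormalized σ ∧ mLE ((ρex d).submatrix ⇑e ⇑e)
        ((((2:ℝ)^(-l) : ℝ)) • ((1 : Matrix (Fin d × Fin d) (Fin d × Fin d) ℂ) ⊗ₖ σ))} := by
    refine ⟨((1:ℝ)/(2*(d:ℝ))) • (1 : Matrix (Fin d × Fin 2) (Fin d × Fin 2) ℂ), ⟨?_, ?_⟩, ?_⟩
    · rw [real_smul_matrix]
      exact psd_smul_real Matrix.PosSemidef.one (by positivity)
    · rw [Matrix.trace_smul, Matrix.trace_one]
      simp only [Complex.smul_re]
      have hcard : ((Fintype.card (Fin d × Fin 2) : ℂ)).re = (Fintype.card (Fin d × Fin 2) : ℝ) := by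
        simp
      rw [hcard]
      simp only [Fintype.card_prod, Fintype.card_fin, smul_eq_mul]
      push_cast
      rw [div_mul_eq_mul_div, one_mul, div_le_one (by positivity)]
      nlinarith
    · unfold mLE
      rw [neg_zero, Real.rpow_zero, one_smul]
      have hkron : ((1 : Matrix (Fin d × Fin d) (Fin d × Fin d) ℂ) ⊗ₖ
          (((1:ℝ)/(2*(d:ℝ))) • (1 : Matrix (Fin d × Fin 2) (Fin d × Fin 2) ℂ)))
          = (((1:ℝ)/(2*(d:ℝ)) : ℝ) : ℂ) •
            (1 : Matrix ((Fin d × Fin d) × (Fin d × Fin 2)) ((Fin d × Fin d) × (Fin d × Fin 2)) ℂ) := by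
        rw [real_smul_matrix, Matrix.kronecker_smul, Matrix.one_kronecker_one]
      rw [hkron, hρ']
      have hdec : (((1:ℝ)/(2*(d:ℝ)) : ℝ) : ℂ) •
            (1 : Matrix ((Fin d × Fin d) × (Fin d × Fin 2)) ((Fin d × Fin d) × (Fin d × Fin 2)) ℂ)
            - ((1:ℂ)/(2*(d:ℂ)*(d:ℂ))) • (V * Vᴴ)
          = (((1:ℝ)/(2*(d:ℝ)) : ℝ) : ℂ) • ((1 : Matrix _ _ ℂ) - ((d:ℂ))⁻¹ • (V * Vᴴ)) := by
        match_scalars <;> push_cast <;> field_simp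
      rw [hdec]
      exact psd_smul_real (psd_one_sub_gram V d hd0 hVgram) (by positivity)
  unfold Hmin
  refine le_antisymm (csSup_le ⟨_, hmem⟩ ub) ?_
  exact le_csSup ⟨0, fun x hx => ub x hx⟩ hmem

/-- Counter-example showing the failure of a min-min chain rule. -/
theorem stmt19 (d : ℕ) (hd : 2 ≤ d) :
    Hmin ((ρex d).submatrix ⇑(Equiv.prodAssoc (Fin d) (Fin d) (Fin d × Fin 2))
        ⇑(Equiv.prodAssoc (Fin d) (Fin d) (Fin d × Fin 2))) = 0 ∧
    Hmin (ρex d) ≤ 1 - Real.logb 2 d ∧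
    Hmin (ptraceLeft (ρex d)) ≤ 1 - Real.logb 2 d :=
  ⟨hmin_assoc_eq d hd, hmin_rhoex_le d hd, hmin_ptrace_le d hd⟩

end QIT
end
end
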